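/- arXiv:2308.15566 — 2 statements merged into one kernel-verified Lean document; each statement's English description precedes it below -/
import Mathlib

section
/- Let K, χ, p̂, c be real numbers and let p, p_c : ℝ → ℝ be functions differentiable at λ₀ that satisfy, for all λ in a neighborhood of λ₀, the coupled implicit return-mapping relations p(λ) = p̂ − K·λ·(2·p(λ) − p_c(λ)) and p_c(λ) = c·exp(χ·λ·(2·p(λ) − p_c(λ))). If 1 + (2K + χ·p_c(λ₀))·λ₀ ≠ 0, then p′(λ₀) = −K·(2·p(λ₀) − p_c(λ₀)) / (1 + (2K + χ·p_c(λ₀))·λ₀) and p_c′(λ₀) = χ·p_c(λ₀)·(2·p(λ₀) − p_c(λ₀)) / (1 + (2K + χ·p_c(λ₀))·λ₀). -/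
open Filter

theorem coupled_return_mapping_derivatives (K χ phat c : ℝ) (p p_c : ℝ → ℝ) (l₀ : ℝ)
    (hp : DifferentiableAt ℝ p l₀) (hpc : DifferentiableAt ℝ p_c l₀)
    (h1 : ∀ᶠ l in nhds l₀, p l = phat - K * l * (2 * p l - p_c l))
    (h2 : ∀ᶠ l in nhds l₀, p_c l = c * Real.exp (χ * l * (2 * p l - p_c l)))
    (hden : 1 + (2 * K + χ * p_c l₀) * l₀ ≠ 0) :
    deriv p l₀ = -K * (2 * p l₀ - p_c l₀) / (1 + (2 * K + χ * p_c l₀) * l₀) ∧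
    deriv p_c l₀ = χ * p_c l₀ * (2 * p l₀ - p_c l₀) / (1 + (2 * K + χ * p_c l₀) * l₀) := by
  have heq2 : p_c l₀ = c * Real.exp (χ * l₀ * (2 * p l₀ - p_c l₀)) := h2.self_of_nhds
  set a := deriv p l₀ with ha
  set b := deriv p_c l₀ with hb
  have hg : HasDerivAt (fun l => 2 * p l - p_c l) (2 * a - b) l₀ :=
    (hp.hasDerivAt.const_mul 2).sub hpc.hasDerivAt
  have hd1 : HasDerivAt (fun l => phat - K * l * (2 * p l - p_c l))
      (0 - (K * (2 * p l₀ - p_c l₀) + K * l₀ * (2 * a - b))) l₀ := by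
    have h := (((hasDerivAt_id l₀).const_mul K).mul hg)
    have h' := (hasDerivAt_const l₀ phat).sub h
    refine h'.congr_deriv ?_
    simp [id]
  have hd2 : HasDerivAt (fun l => c * Real.exp (χ * l * (2 * p l - p_c l)))
      (c * (Real.exp (χ * l₀ * (2 * p l₀ - p_c l₀)) *
        (χ * (2 * p l₀ - p_c l₀) + χ * l₀ * (2 * a - b)))) l₀ := by
    have h := (((hasDerivAt_id l₀).const_mul χ).mul hg).exp.const_mul c
    refine h.congr_deriv ?_
    simp [id]
  have e1 : a = 0 - (K * (2 * p l₀ - p_c l₀) + K * l₀ * (2 * a - b)) :=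
    (Filter.EventuallyEq.deriv_eq h1).trans hd1.deriv
  have e2 : b = c * (Real.exp (χ * l₀ * (2 * p l₀ - p_c l₀)) *
      (χ * (2 * p l₀ - p_c l₀) + χ * l₀ * (2 * a - b))) :=
    (Filter.EventuallyEq.deriv_eq h2).trans hd2.deriv
  rw [← mul_assoc, ← heq2] at e2
  have hs : (1 + (2 * K + χ * p_c l₀) * l₀) * (2 * a - b)
      = -(2 * K + χ * p_c l₀) * (2 * p l₀ - p_c l₀) := by
    linear_combination 2 * e1 - e2
  constructor
  · rw [eq_div_iff hden]
    linear_combination (1 + (2 * K + χ * p_c l₀) * l₀) * e1 - K * l₀ * hs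
  · rw [eq_div_iff hden]
    linear_combination (1 + (2 * K + χ * p_c l₀) * l₀) * e2 + χ * p_c l₀ * l₀ * hs
end

section
/- Let K, G, M, χ > 0 and p̂, q̂, c be real numbers, let λ₀ ≥ 0, and let p, p_c : ℝ → ℝ be differentiable at λ₀ and satisfy, for all λ near λ₀, p(λ) = p̂ − K·λ·(2·p(λ) − p_c(λ)) and p_c(λ) = c·exp(χ·λ·(2·p(λ) − p_c(λ))), with p_c(λ₀) > 0. Define q(λ) = q̂/(1 + 6·G·λ/M²) and the yield value F(λ) = q(λ)²/M² + p(λ)·(p(λ) − p_c(λ)). Then F is differentiable at λ₀ and F′(λ₀) = −K·(2·p(λ₀) − p_c(λ₀))²/(1 + (2K + χ·p_c(λ₀))·λ₀) − (2·q(λ₀)/M²)·q(λ₀)/(λ₀ + M²/(6G)) − χ·p(λ₀)·p_c(λ₀)·(2·p(λ₀) − p_c(λ₀))/(1 + (2K + χ·p_c(λ₀))·λ₀). -/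
open Filter

theorem yield_function_derivative_along_return_path
    (K G M χ phat qhat c : ℝ)
    (hK : 0 < K) (hG : 0 < G) (hM : 0 < M) (hχ : 0 < χ)
    (l₀ : ℝ) (hl₀ : 0 ≤ l₀) (p p_c : ℝ → ℝ)
    (hp : DifferentiableAt ℝ p l₀) (hpc : DifferentiableAt ℝ p_c l₀)
    (h1 : ∀ᶠ l in nhds l₀, p l = phat - K * l * (2 * p l - p_c l))
    (h2 : ∀ᶠ l in nhds l₀, p_c l = c * Real.exp (χ * l * (2 * p l - p_c l)))
    (hpc0 : 0 < p_c l₀) :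
    HasDerivAt
      (fun l : ℝ =>
        (qhat / (1 + 6 * G * l / M ^ 2)) ^ 2 / M ^ 2 + p l * (p l - p_c l))
      (-K * (2 * p l₀ - p_c l₀) ^ 2 / (1 + (2 * K + χ * p_c l₀) * l₀)
        - (2 * (qhat / (1 + 6 * G * l₀ / M ^ 2)) / M ^ 2)
            * (qhat / (1 + 6 * G * l₀ / M ^ 2)) / (l₀ + M ^ 2 / (6 * G))
        - χ * p l₀ * p_c l₀ * (2 * p l₀ - p_c l₀) / (1 + (2 * K + χ * p_c l₀) * l₀))
      l₀ := by
  set a := deriv p l₀ with ha_def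
  set b := deriv p_c l₀ with hb_def
  have ha : HasDerivAt p a l₀ := hp.hasDerivAt
  have hb : HasDerivAt p_c b l₀ := hpc.hasDerivAt
  have hA : 0 < 1 + (2 * K + χ * p_c l₀) * l₀ := by
    have : 0 ≤ (2 * K + χ * p_c l₀) * l₀ := by positivity
    linarith
  have hB : 0 < 1 + χ * p_c l₀ * l₀ := by
    have : 0 ≤ χ * p_c l₀ * l₀ := by positivity
    linarith
  -- implicit differentiation of h1
  have hinner : HasDerivAt (fun l => 2 * p l - p_c l) (2 * a - b) l₀ :=
    (ha.const_mul 2).sub hb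
  have hg1 : HasDerivAt (fun l => phat - K * l * (2 * p l - p_c l))
      (0 - ((K * 1) * (2 * p l₀ - p_c l₀) + (K * l₀) * (2 * a - b))) l₀ :=
    (hasDerivAt_const l₀ phat).sub (((hasDerivAt_id l₀).const_mul K).mul hinner)
  have eq1 : a = 0 - ((K * 1) * (2 * p l₀ - p_c l₀) + (K * l₀) * (2 * a - b)) :=
    ha.unique (hg1.congr_of_eventuallyEq h1)
  -- implicit differentiation of h2
  have hu : HasDerivAt (fun l => χ * l * (2 * p l - p_c l))
      ((χ * 1) * (2 * p l₀ - p_c l₀) + (χ * l₀) * (2 * a - b)) l₀ :=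
    ((hasDerivAt_id l₀).const_mul χ).mul hinner
  have hg2 : HasDerivAt (fun l => c * Real.exp (χ * l * (2 * p l - p_c l)))
      (c * (Real.exp (χ * l₀ * (2 * p l₀ - p_c l₀)) *
        ((χ * 1) * (2 * p l₀ - p_c l₀) + (χ * l₀) * (2 * a - b)))) l₀ := hu.exp.const_mul c
  have eq2 : b = c * (Real.exp (χ * l₀ * (2 * p l₀ - p_c l₀)) *
      ((χ * 1) * (2 * p l₀ - p_c l₀) + (χ * l₀) * (2 * a - b))) :=
    hb.unique (hg2.congr_of_eventuallyEq h2)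
  have hc : c * Real.exp (χ * l₀ * (2 * p l₀ - p_c l₀)) = p_c l₀ := (h2.self_of_nhds).symm
  have eq2' : b = p_c l₀ * (χ * (2 * p l₀ - p_c l₀) + χ * l₀ * (2 * a - b)) := by
    linear_combination eq2 +
      ((χ * 1) * (2 * p l₀ - p_c l₀) + (χ * l₀) * (2 * a - b)) * hc
  -- solve the linear system for a and b
  have eA : a * (1 + (2 * K + χ * p_c l₀) * l₀) = -K * (2 * p l₀ - p_c l₀) := by
    linear_combination (1 + χ * p_c l₀ * l₀) * eq1 + (K * l₀) * eq2'
  have eB2 : b * (1 + (2 * K + χ * p_c l₀) * l₀) * (1 + χ * p_c l₀ * l₀)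
      = χ * p_c l₀ * (2 * p l₀ - p_c l₀) * (1 + χ * p_c l₀ * l₀) := by
    linear_combination (1 + (2 * K + χ * p_c l₀) * l₀) * eq2'
      + 2 * χ * p_c l₀ * l₀ * eA
  have eB : b * (1 + (2 * K + χ * p_c l₀) * l₀) = χ * p_c l₀ * (2 * p l₀ - p_c l₀) :=
    mul_right_cancel₀ hB.ne' eB2
  have ea' : a = -K * (2 * p l₀ - p_c l₀) / (1 + (2 * K + χ * p_c l₀) * l₀) :=
    (eq_div_iff hA.ne').mpr eA
  have eb' : b = χ * p_c l₀ * (2 * p l₀ - p_c l₀) / (1 + (2 * K + χ * p_c l₀) * l₀) :=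
    (eq_div_iff hA.ne').mpr eB
  -- q part
  have hden : HasDerivAt (fun l : ℝ => 1 + 6 * G * l / M ^ 2) (6 * G * 1 / M ^ 2) l₀ :=
    (((hasDerivAt_id l₀).const_mul (6 * G)).div_const (M ^ 2)).const_add 1
  have hd0 : (0:ℝ) < 1 + 6 * G * l₀ / M ^ 2 := by positivity
  have hq : HasDerivAt (fun l : ℝ => qhat / (1 + 6 * G * l / M ^ 2))
      ((0 * (1 + 6 * G * l₀ / M ^ 2) - qhat * (6 * G * 1 / M ^ 2)) /
        (1 + 6 * G * l₀ / M ^ 2) ^ 2) l₀ :=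
    (hasDerivAt_const l₀ qhat).div hden hd0.ne'
  have hq2 : HasDerivAt (fun l : ℝ => (qhat / (1 + 6 * G * l / M ^ 2)) ^ 2 / M ^ 2)
      ((2 * (qhat / (1 + 6 * G * l₀ / M ^ 2)) ^ 1 *
        ((0 * (1 + 6 * G * l₀ / M ^ 2) - qhat * (6 * G * 1 / M ^ 2)) /
          (1 + 6 * G * l₀ / M ^ 2) ^ 2)) / M ^ 2) l₀ := by
    have := hq.pow 2
    simpa using this.div_const (M ^ 2)
  have hpp : HasDerivAt (fun l => p l * (p l - p_c l))
      (a * (p l₀ - p_c l₀) + p l₀ * (a - b)) l₀ := ha.mul (ha.sub hb)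
  have htot := hq2.add hpp
  refine htot.congr_deriv ?_
  symm
  rw [ea', eb']
  have hl : (0:ℝ) < l₀ + M ^ 2 / (6 * G) := by positivity
  field_simp
  ring
end
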